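/- arXiv:2412.07908 — 4 statements merged into one kernel-verified Lean document; each statement's English description precedes it below -/
import Mathlib

section
/- Let θ be irrational, r ∈ ℕ with r ≥ 1, σ ∈ ℕ with σ·{rθ} < 1, and suppose {rθ} = ‖rθ‖ (i.e., {rθ} < 1/2). If m ∈ ℕ and α ∈ (0,1) satisfy {mθ + α} + {σrθ} < 1, then for every k with 0 ≤ k ≤ σ, ⌊(m + kr)θ + α⌋ = ⌊mθ + α⌋ + k·⌊rθ⌋. -/
/-- If `θ` is irrational, `r ≥ 1`, `σ·{rθ} < 1`, `{rθ} < 1/2`, and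
`{mθ + α} + {σrθ} < 1`, then for every `k ≤ σ`,
`⌊(m + kr)θ + α⌋ = ⌊mθ + α⌋ + k·⌊rθ⌋`. -/
theorem stmt5 (θ : ℝ) (hθ : Irrational θ) (hθ0 : 0 < θ) (hθ1 : θ < 1)
    (r : ℕ) (hr : 1 ≤ r) (σ : ℕ)
    (hσr : (σ : ℝ) * Int.fract (r * θ) < 1)
    (hhalf : Int.fract ((r : ℝ) * θ) < 1 / 2)
    (m : ℕ) (α : ℝ) (hα0 : 0 < α) (hα1 : α < 1)
    (hm : Int.fract ((m : ℝ) * θ + α) + Int.fract ((σ : ℝ) * r * θ) < 1) :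
    ∀ k : ℕ, k ≤ σ →
      ⌊((m : ℝ) + k * r) * θ + α⌋ = ⌊(m : ℝ) * θ + α⌋ + k * ⌊(r : ℝ) * θ⌋ := by
  intro k hk
  have hfr0 : 0 ≤ Int.fract ((r : ℝ) * θ) := Int.fract_nonneg _
  -- fract (σ r θ) = σ * fract (r θ)
  have hfrac : Int.fract ((σ : ℝ) * r * θ) = (σ : ℝ) * Int.fract ((r : ℝ) * θ) := by
    have h1 : (σ : ℝ) * r * θ = (σ : ℝ) * Int.fract ((r : ℝ) * θ) + (σ * ⌊(r : ℝ) * θ⌋ : ℤ) := by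
      push_cast
      rw [Int.fract]
      ring
    rw [h1, Int.fract_add_intCast, Int.fract_eq_self.mpr]
    constructor
    · positivity
    · exact hσr
  rw [hfrac] at hm
  have hfA : 0 ≤ Int.fract ((m : ℝ) * θ + α) := Int.fract_nonneg _
  have hk' : (k : ℝ) * Int.fract ((r : ℝ) * θ) ≤ (σ : ℝ) * Int.fract ((r : ℝ) * θ) := by
    apply mul_le_mul_of_nonneg_right _ hfr0
    exact_mod_cast hk
  have hsum : Int.fract ((m : ℝ) * θ + α) + (k : ℝ) * Int.fract ((r : ℝ) * θ) < 1 :=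
    lt_of_le_of_lt (by linarith) hm
  have hsum0 : 0 ≤ Int.fract ((m : ℝ) * θ + α) + (k : ℝ) * Int.fract ((r : ℝ) * θ) := by
    positivity
  have key : ((m : ℝ) + k * r) * θ + α =
      (Int.fract ((m : ℝ) * θ + α) + (k : ℝ) * Int.fract ((r : ℝ) * θ))
        + ((⌊(m : ℝ) * θ + α⌋ + k * ⌊(r : ℝ) * θ⌋ : ℤ) : ℝ) := by
    rw [Int.fract, Int.fract]
    push_cast
    ring
  rw [key, Int.floor_add_intCast, Int.floor_eq_zero_iff.mpr ⟨hsum0, hsum⟩, zero_add]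
end

section
/- Let f ∈ ℤ[x] be a non-constant polynomial with σ := deg(f) + 1, let b_k := (-1)^k·C(σ,k), let θ ∈ (0,1) be irrational with {rθ} < 1/2 and σ·{rθ} < 1 for some positive integer r, and let α ∈ (0,1). If m ∈ ℕ satisfies {mθ + α} + {σrθ} < 1, then Σ_{k=0}^{σ} b_k · f(⌊(m + kr)θ + α⌋) = 0. -/
open Polynomial fwdDiff

lemma fwdDiff_poly_eval (p : Polynomial ℤ) :
    Δ_[1] (fun y : ℤ => p.eval y) = fun y : ℤ => (p.comp (X + 1) - p).eval y := by
  funext y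
  simp [fwdDiff, eval_comp]

lemma natDegree_comp_X_add_one_sub_lt (p : Polynomial ℤ) (hp : 1 ≤ p.natDegree) :
    (p.comp (X + 1) - p).natDegree < p.natDegree := by
  have hp0 : p ≠ 0 := fun h => by simp [h] at hp
  have hX : (X + 1 : Polynomial ℤ).natDegree = 1 := by
    simpa using Polynomial.natDegree_X_add_C (1 : ℤ)
  have hmon : (X + 1 : Polynomial ℤ).Monic := by
    simpa using monic_X_add_C (1 : ℤ)
  have hnd : (p.comp (X + 1)).natDegree = p.natDegree := by
    rw [natDegree_comp, hX, mul_one]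
  have hc0 : p.comp (X + 1) ≠ 0 := by
    intro h
    rw [h] at hnd
    simp at hnd; omega
  have hdeg : (p.comp (X + 1)).degree = p.degree := by
    rw [degree_eq_natDegree hc0, degree_eq_natDegree hp0, hnd]
  have hlc : (p.comp (X + 1)).leadingCoeff = p.leadingCoeff := by
    rw [leadingCoeff_comp (by rw [hX]; omega), hmon.leadingCoeff]
    simp
  have hlt := Polynomial.degree_sub_lt hdeg hc0 hlc
  rcases eq_or_ne (p.comp (X + 1) - p) 0 with h0 | h0
  · rw [h0]; simpa using (show 0 < p.natDegree by omega)
  · exact Polynomial.natDegree_lt_natDegree h0 (by rwa [hdeg] at hlt)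

lemma fwdDiff_iter_poly (n : ℕ) (p : Polynomial ℤ) (hp : p.natDegree < n) (x : ℤ) :
    (Δ_[(1:ℤ)])^[n] (fun y : ℤ => p.eval y) x = 0 := by
  induction n generalizing p x with
  | zero => omega
  | succ n ih =>
    rw [Function.iterate_succ_apply, fwdDiff_poly_eval]
    rcases Nat.lt_or_ge p.natDegree 1 with h1 | h1
    · obtain ⟨a, rfl⟩ := Polynomial.natDegree_eq_zero.mp (show p.natDegree = 0 by omega)
      simp [fwdDiff_iter_eq_sum_shift]
    · exact ih _ (lt_of_lt_of_le (natDegree_comp_X_add_one_sub_lt p h1) (by omega)) x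

/-- Item 1 of Claim 4.3: if `f ∈ ℤ[x]` is non-constant, `σ = deg f + 1`,
`b_k = (-1)^k C(σ,k)`, `θ ∈ (0,1)` irrational with `{rθ} < 1/2` and `σ{rθ} < 1`,
`α ∈ (0,1)`, and `{mθ+α} + {σrθ} < 1`, then `Σ_{k=0}^{σ} b_k f(⌊(m+kr)θ+α⌋) = 0`. -/
theorem stmt6 (f : Polynomial ℤ) (hf : 1 ≤ f.natDegree) (σ : ℕ)
    (hσ : σ = f.natDegree + 1)
    (θ : ℝ) (hθ : Irrational θ) (hθ0 : 0 < θ) (hθ1 : θ < 1)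
    (r : ℕ) (hr : 0 < r)
    (hhalf : Int.fract ((r : ℝ) * θ) < 1 / 2)
    (hσr : (σ : ℝ) * Int.fract ((r : ℝ) * θ) < 1)
    (α : ℝ) (hα0 : 0 < α) (hα1 : α < 1)
    (m : ℕ)
    (hm : Int.fract ((m : ℝ) * θ + α) + Int.fract ((σ : ℝ) * r * θ) < 1) :
    ∑ k ∈ Finset.range (σ + 1),
      (-1 : ℤ) ^ k * (σ.choose k : ℤ) * f.eval ⌊((m : ℝ) + k * r) * θ + α⌋ = 0 := by
  set A : ℤ := ⌊(m : ℝ) * θ + α⌋ with hA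
  set B : ℤ := ⌊(r : ℝ) * θ⌋ with hB
  -- fract (σ r θ) = σ * fract (r θ)
  have hfrac : Int.fract ((σ : ℝ) * r * θ) = (σ : ℝ) * Int.fract ((r : ℝ) * θ) := by
    have h1 : (σ : ℝ) * r * θ = ((σ : ℤ) * B : ℤ) + (σ : ℝ) * Int.fract ((r : ℝ) * θ) := by
      push_cast [Int.fract]
      ring
    rw [h1, Int.fract_intCast_add, Int.fract_eq_self.mpr
      ⟨mul_nonneg (Nat.cast_nonneg σ) (Int.fract_nonneg _), hσr⟩]
  -- no-carry floor computation
  have hfloor : ∀ k ≤ σ, ⌊((m : ℝ) + k * r) * θ + α⌋ = A + k * B := by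
    intro k hk
    have hsum0 : (0 : ℝ) ≤ Int.fract ((m : ℝ) * θ + α) + k * Int.fract ((r : ℝ) * θ) := by
      have h1 := Int.fract_nonneg ((m : ℝ) * θ + α)
      have h2 := Int.fract_nonneg ((r : ℝ) * θ)
      have h3 : (0:ℝ) ≤ (k:ℝ) := Nat.cast_nonneg k
      nlinarith
    have hsum1 : Int.fract ((m : ℝ) * θ + α) + k * Int.fract ((r : ℝ) * θ) < 1 := by
      have hk' : (k : ℝ) ≤ (σ : ℝ) := by exact_mod_cast hk
      have hfr := Int.fract_nonneg ((r : ℝ) * θ)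
      nlinarith [hm, hfrac]
    have heq : ((m : ℝ) + k * r) * θ + α
        = ((A + k * B : ℤ) : ℝ) + (Int.fract ((m : ℝ) * θ + α) + k * Int.fract ((r : ℝ) * θ)) := by
      push_cast [Int.fract]
      ring
    rw [heq, Int.floor_intCast_add]
    have : ⌊Int.fract ((m : ℝ) * θ + α) + k * Int.fract ((r : ℝ) * θ)⌋ = 0 :=
      Int.floor_eq_zero_iff.mpr ⟨hsum0, hsum1⟩
    omega
  -- reduce to forward differences of a polynomial of degree < σ
  set p : Polynomial ℤ := f.comp (Polynomial.C A + X * Polynomial.C B) with hp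
  have hpeval : ∀ k : ℤ, p.eval k = f.eval (A + k * B) := by
    intro k; simp [hp, eval_comp]
  have hpdeg : p.natDegree < σ := by
    have h1 : (Polynomial.C A + X * Polynomial.C B).natDegree ≤ 1 := by
      compute_degree
    have := Polynomial.natDegree_comp_le (p := f) (q := Polynomial.C A + X * Polynomial.C B)
    calc p.natDegree ≤ f.natDegree * (Polynomial.C A + X * Polynomial.C B).natDegree := this
      _ ≤ f.natDegree * 1 := Nat.mul_le_mul_left _ h1
      _ < σ := by omega
  have hzero : (Δ_[(1:ℤ)])^[σ] (fun y : ℤ => p.eval y) 0 = 0 := fwdDiff_iter_poly σ p hpdeg 0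
  rw [fwdDiff_iter_eq_sum_shift] at hzero
  calc ∑ k ∈ Finset.range (σ + 1),
      (-1 : ℤ) ^ k * (σ.choose k : ℤ) * f.eval ⌊((m : ℝ) + k * r) * θ + α⌋
      = (-1) ^ σ * ∑ k ∈ Finset.range (σ + 1),
        ((-1 : ℤ) ^ (σ - k) * (σ.choose k : ℤ)) • p.eval (0 + k • (1:ℤ)) := by
        rw [Finset.mul_sum]
        refine Finset.sum_congr rfl fun k hk => ?_
        have hkσ : k ≤ σ := by
          have := Finset.mem_range.mp hk; omega
        have hσs : (-1 : ℤ) ^ σ = (-1) ^ (σ - k) * (-1) ^ k := by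
          rw [← pow_add, Nat.sub_add_cancel hkσ]
        have h2 : (-1 : ℤ) ^ (σ - k) * (-1) ^ (σ - k) = 1 := by
          rw [← pow_add]
          exact Even.neg_one_pow ⟨σ - k, rfl⟩
        have hev : p.eval (0 + k • (1:ℤ)) = f.eval (A + k * B) := by
          simp [hpeval]
        rw [hev, hfloor k hkσ, smul_eq_mul, hσs]
        calc (-1 : ℤ) ^ k * (σ.choose k : ℤ) * f.eval (A + k * B)
            = ((-1 : ℤ) ^ (σ - k) * (-1) ^ (σ - k)) * ((-1) ^ k * (σ.choose k : ℤ)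
                * f.eval (A + k * B)) := by rw [h2, one_mul]
          _ = (-1) ^ (σ - k) * (-1) ^ k * ((-1) ^ (σ - k) * (σ.choose k : ℤ)
                * f.eval (A + k * B)) := by ring
      _ = (-1) ^ σ * 0 := by rw [hzero]
      _ = 0 := mul_zero _
end

section
/- Let f ∈ ℤ[x] be non-constant of degree σ-1 with leading coefficient a, and for ℓ with 0 ≤ ℓ ≤ σ-1 define p(x,y) := Σ_{k=0}^{ℓ} (-1)^k·C(σ,k)·(f(x + ky) - f(x + 1 + ky)) ∈ ℤ[x,y]. Then the coefficient of x^{σ-2} in p (viewing p as a polynomial in x with coefficients in ℤ[y]) equals a·(1-σ)·(-1)^ℓ·C(σ-1,ℓ), which is nonzero. -/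
open Polynomial

lemma alt_sum (n : ℕ) : ∀ ℓ ≤ n, ∑ k ∈ Finset.range (ℓ+1), (-1:ℤ)^k * ((n+1).choose k : ℤ)
    = (-1)^ℓ * (n.choose ℓ : ℤ) := by
  intro ℓ
  induction ℓ with
  | zero => simp
  | succ m ih =>
    intro h
    rw [Finset.sum_range_succ, ih (by omega), Nat.choose_succ_succ (n) (m)]
    push_cast
    ring

lemma lin_eval_diff (h : Polynomial (Polynomial ℤ)) (hd : h.natDegree ≤ 1) (u v : Polynomial ℤ) :
    h.eval u - h.eval v = h.coeff 1 * (u - v) := by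
  have := Polynomial.eq_X_add_C_of_natDegree_le_one hd
  rw [this]
  simp [mul_sub]

/-- Let `f ∈ ℤ[x]` be non-constant of degree `σ-1` with leading coefficient `a`, and for
`0 ≤ ℓ ≤ σ-1` let `p(x,y) := Σ_{k=0}^{ℓ} (-1)^k C(σ,k) (f(x+ky) - f(x+1+ky))`, viewed
as a polynomial in `x` over `ℤ[y]`.  Then the coefficient of `x^{σ-2}` in `p` equals
`a·(1-σ)·(-1)^ℓ·C(σ-1,ℓ)`, which is nonzero. -/
theorem stmt7 (σ : ℕ) (hσ : 2 ≤ σ) (f : Polynomial ℤ) (hdeg : f.natDegree = σ - 1)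
    (a : ℤ) (ha : a = f.leadingCoeff) (ℓ : ℕ) (hℓ : ℓ ≤ σ - 1)
    (p : Polynomial (Polynomial ℤ))
    (hp : p = ∑ k ∈ Finset.range (ℓ + 1),
        C (C ((-1 : ℤ) ^ k * (σ.choose k : ℤ))) *
          ((f.map (Polynomial.C : ℤ →+* Polynomial ℤ)).comp (X + C ((k : ℤ) • X)) -
           (f.map (Polynomial.C : ℤ →+* Polynomial ℤ)).comp (X + C (1 + (k : ℤ) • X)))) :
    p.coeff (σ - 2) = C (a * (1 - (σ : ℤ)) * (-1) ^ ℓ * ((σ - 1).choose ℓ : ℤ)) ∧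
      a * (1 - (σ : ℤ)) * (-1) ^ ℓ * ((σ - 1).choose ℓ : ℤ) ≠ 0 := by
  set g := f.map (Polynomial.C : ℤ →+* Polynomial ℤ) with hgdef
  have hginj : Function.Injective (Polynomial.C : ℤ →+* Polynomial ℤ) := C_injective
  have hg : g.natDegree = σ - 1 := by
    rw [hgdef, natDegree_map_eq_of_injective hginj, hdeg]
  -- h = hasseDeriv (σ-2) g
  set h := hasseDeriv (σ - 2) g with hhdef
  have hhd : h.natDegree ≤ 1 := by
    have := natDegree_hasseDeriv_le g (σ - 2)
    rw [hg, ← hhdef] at this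
    omega
  have hgcoef : g.coeff (σ - 1) = C a := by
    rw [hgdef, coeff_map, ha, leadingCoeff, hdeg]
  have hh1 : h.coeff 1 = C ((σ : ℤ) - 1) * C a := by
    rw [hhdef, hasseDeriv_coeff]
    have e1 : 1 + (σ - 2) = σ - 1 := by omega
    rw [e1, hgcoef]
    have e2 : (σ - 1).choose (σ - 2) = σ - 1 := by
      have e : σ - 2 = (σ - 1) - 1 := by omega
      rw [e, Nat.choose_symm (by omega), Nat.choose_one_right]
    rw [e2]
    have : ((σ - 1 : ℕ) : Polynomial ℤ) = C ((σ : ℤ) - 1) := by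
      push_cast [Nat.cast_sub (by omega : 1 ≤ σ)]
      simp
    rw [this]
  -- per-term coefficient
  have key : ∀ u : Polynomial ℤ,
      (g.comp (X + C u) - g.comp (X + C (1 + u))).coeff (σ - 2)
        = C (a * (1 - (σ:ℤ))) := by
    intro u
    rw [coeff_sub, ← taylor_apply, ← taylor_apply, taylor_coeff, taylor_coeff, ← hhdef,
      lin_eval_diff h hhd, hh1]
    have hu : u - (1 + u) = -1 := by ring
    rw [hu, mul_neg_one, ← C_mul, ← C_neg]
    congr 1; ring
  rw [hp, finset_sum_coeff]
  constructor
  · have : ∀ k ∈ Finset.range (ℓ+1),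
        (C (C ((-1 : ℤ) ^ k * (σ.choose k : ℤ))) *
          (g.comp (X + C ((k : ℤ) • X)) - g.comp (X + C (1 + (k : ℤ) • X)))).coeff (σ - 2)
        = C (((-1 : ℤ) ^ k * (σ.choose k : ℤ)) * (a * (1 - (σ:ℤ)))) := by
      intro k _
      rw [coeff_C_mul, key, ← C_mul]
    rw [Finset.sum_congr rfl this, ← map_sum, ← Finset.sum_mul]
    have e3 : σ = (σ - 1) + 1 := by omega
    have := alt_sum (σ - 1) ℓ hℓ
    rw [← e3] at this
    rw [this]
    congr 1
    ring
  · have hf0 : f ≠ 0 := by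
      intro h0
      rw [h0] at hdeg
      simp at hdeg
      omega
    have ha0 : a ≠ 0 := by rw [ha]; exact leadingCoeff_ne_zero.mpr hf0
    have hc0 : ((σ - 1).choose ℓ : ℤ) ≠ 0 := by
      exact_mod_cast (Nat.choose_pos hℓ).ne'
    have : (1 - (σ:ℤ)) ≠ 0 := by
      have : (2:ℤ) ≤ σ := by exact_mod_cast hσ
      omega
    exact mul_ne_zero (mul_ne_zero (mul_ne_zero ha0 this) (pow_ne_zero _ (by norm_num))) hc0
end

section
/- Let β be an algebraic number that is not a root of unity with H(β) > 1, and let f ∈ K[x, x^{-1}] be a Laurent polynomial with at most k+1 terms over a number field K. Suppose f = g + h where every monomial of g has degree at most d_0 and every monomial of h has degree at least d_1. If d_1 - d_0 > log(k·H(f))/log H(β) and f(β) = 0, then g(β) = 0 and h(β) = 0. -/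
set_option linter.unusedSectionVars false
set_option linter.unusedVariables false
set_option linter.unusedTactic false


open NumberField IsDedekindDomain Finset Classical

/-- The order of `x ∈ K` at the finite place `v` (junk value `0` at `x = 0`). -/
noncomputable def finOrd {K : Type*} [Field K] [NumberField K]
    (v : HeightOneSpectrum (𝓞 K)) (x : K) : ℤ :=
  if h : v.valuation K x = 0 then 0 else - Multiplicative.toAdd (WithZero.unzero h)

/-- The normalized `v`-adic absolute value `|x|_v = N(𝔭)^{-ord_𝔭(x)/d}` of `x ∈ K`,
where `d = [K : ℚ]` (with the convention `|0|_v = 0`). -/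
noncomputable def finAbs {K : Type*} [Field K] [NumberField K]
    (v : HeightOneSpectrum (𝓞 K)) (x : K) : ℝ :=
  if x = 0 then 0 else
    (Ideal.absNorm v.asIdeal : ℝ) ^
      (-(finOrd v x : ℝ) / (Module.finrank ℚ K : ℝ))

/-- The absolute Weil height of the projective point with homogeneous coordinates
`a = (a i)_{i : ι}` in a number field `K`: the product over all infinite places `w`
of `(max_i w (a i))^{mult w / d}` times the product over all finite places `v` of
`max_i |a i|_v` (for each tuple, all but finitely many finite factors equal `1`). -/
noncomputable def weilHeight {K : Type*} [Field K] [NumberField K]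
    {ι : Type*} [Fintype ι] (a : ι → K) : ℝ :=
  (∏ w : InfinitePlace K,
      (⨆ i, w (a i)) ^ ((InfinitePlace.mult w : ℝ) / (Module.finrank ℚ K : ℝ))) *
    ∏ᶠ v : HeightOneSpectrum (𝓞 K), ⨆ i, finAbs v (a i)

/-- The absolute Weil height `H(β) = H([1 : β])` of an element `β` of a number field. -/
noncomputable def weilHeightElem {K : Type*} [Field K] [NumberField K] (β : K) : ℝ :=
  weilHeight ![1, β]

/-- The height `H(f)` of a Laurent polynomial: the height of the projective point given
by its vector of coefficients. -/
noncomputable def weilHeightLaurent {K : Type*} [Field K] [NumberField K]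
    (f : LaurentPolynomial K) : ℝ :=
  weilHeight (fun i : f.coeff.support => f.coeff i.1)

/-- Evaluation of a Laurent polynomial at a nonzero element of a field. -/
noncomputable def laurentEval {K : Type*} [Field K]
    (f : LaurentPolynomial K) (β : K) : K :=
  ∑ i ∈ f.coeff.support, f.coeff i * β ^ i

section L2
variable {K : Type*} [Field K] [NumberField K] (v : HeightOneSpectrum (𝓞 K))

variable {K : Type*} [Field K] [NumberField K] (v : HeightOneSpectrum (𝓞 K))

lemma val_ne_zero {x : K} (hx : x ≠ 0) : v.valuation K x ≠ 0 := by
  simpa [Valuation.zero_iff] using hx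

lemma val_eq_ofAdd {x : K} (hx : x ≠ 0) :
    v.valuation K x = ((Multiplicative.ofAdd (-finOrd v x) : Multiplicative ℤ) : WithZero (Multiplicative ℤ)) := by
  have h := val_ne_zero v hx
  rw [finOrd, dif_neg h, neg_neg, ofAdd_toAdd, WithZero.coe_unzero]

lemma finOrd_eq_of_val (e : ℤ) {x : K} (hx : x ≠ 0)
    (h : v.valuation K x = ((Multiplicative.ofAdd (-e) : Multiplicative ℤ) : WithZero (Multiplicative ℤ))) :
    finOrd v x = e := by
  have h2 := val_eq_ofAdd v hx
  rw [h] at h2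
  have := WithZero.coe_inj.mp h2
  simpa using Multiplicative.ofAdd.injective this |>.symm

lemma finOrd_one : finOrd v (1 : K) = 0 := by
  apply finOrd_eq_of_val v 0 one_ne_zero
  simp

lemma finOrd_mul {x y : K} (hx : x ≠ 0) (hy : y ≠ 0) :
    finOrd v (x * y) = finOrd v x + finOrd v y := by
  apply finOrd_eq_of_val v _ (mul_ne_zero hx hy)
  rw [map_mul, val_eq_ofAdd v hx, val_eq_ofAdd v hy, ← WithZero.coe_mul, ← ofAdd_add]
  ring_nf

lemma finOrd_inv {x : K} (hx : x ≠ 0) : finOrd v x⁻¹ = - finOrd v x := by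
  apply finOrd_eq_of_val v _ (inv_ne_zero hx)
  rw [map_inv₀, val_eq_ofAdd v hx, ← WithZero.coe_inv, ← ofAdd_neg]

lemma finOrd_zpow {x : K} (hx : x ≠ 0) (n : ℤ) : finOrd v (x ^ n) = n * finOrd v x := by
  apply finOrd_eq_of_val v _ (zpow_ne_zero n hx)
  rw [map_zpow₀, val_eq_ofAdd v hx, ← WithZero.coe_zpow, ← ofAdd_zsmul]
  norm_num [mul_comm]

lemma val_le_val_iff {x y : K} (hx : x ≠ 0) (hy : y ≠ 0) :
    v.valuation K x ≤ v.valuation K y ↔ finOrd v y ≤ finOrd v x := by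
  rw [val_eq_ofAdd v hx, val_eq_ofAdd v hy, WithZero.coe_le_coe, Multiplicative.ofAdd_le,
    neg_le_neg_iff]



lemma one_lt_normv : 1 < (Ideal.absNorm v.asIdeal : ℝ) := by
  have h0 : Ideal.absNorm v.asIdeal ≠ 0 := by
    rw [Ne, Ideal.absNorm_eq_zero_iff]
    exact v.ne_bot
  have h1 : Ideal.absNorm v.asIdeal ≠ 1 := by
    rw [Ne, Ideal.absNorm_eq_one_iff]
    exact v.isPrime.ne_top
  have : 2 ≤ Ideal.absNorm v.asIdeal := by omega
  exact_mod_cast by omega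

lemma finrank_pos' : (0:ℝ) < (Module.finrank ℚ K : ℝ) := by
  exact_mod_cast Module.finrank_pos

lemma finAbs_eq {x : K} (hx : x ≠ 0) : finAbs v x =
    (Ideal.absNorm v.asIdeal : ℝ) ^ (-(finOrd v x : ℝ) / (Module.finrank ℚ K : ℝ)) :=
  if_neg hx

lemma finAbs_zero : finAbs v (0 : K) = 0 := if_pos rfl

lemma finAbs_pos {x : K} (hx : x ≠ 0) : 0 < finAbs v x := by
  rw [finAbs_eq v hx]
  exact Real.rpow_pos_of_pos (lt_trans one_pos (one_lt_normv v)) _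

lemma finAbs_nonneg (x : K) : 0 ≤ finAbs v x := by
  rcases eq_or_ne x 0 with rfl | hx
  · rw [finAbs_zero]
  · exact (finAbs_pos v hx).le

lemma finAbs_one : finAbs v (1 : K) = 1 := by
  rw [finAbs_eq v one_ne_zero, finOrd_one]
  norm_num

lemma finAbs_mul (x y : K) : finAbs v (x * y) = finAbs v x * finAbs v y := by
  rcases eq_or_ne x 0 with rfl | hx
  · simp [finAbs_zero]
  rcases eq_or_ne y 0 with rfl | hy
  · simp [finAbs_zero]
  rw [finAbs_eq v hx, finAbs_eq v hy, finAbs_eq v (mul_ne_zero hx hy),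
    finOrd_mul v hx hy, ← Real.rpow_add (lt_trans one_pos (one_lt_normv v))]
  congr 1
  push_cast
  ring

lemma finAbs_le_finAbs_iff {x y : K} (hx : x ≠ 0) (hy : y ≠ 0) :
    finAbs v x ≤ finAbs v y ↔ v.valuation K x ≤ v.valuation K y := by
  rw [finAbs_eq v hx, finAbs_eq v hy,
    Real.rpow_le_rpow_left_iff (one_lt_normv v), val_le_val_iff v hx hy,
    div_le_div_iff_of_pos_right (finrank_pos' (K := K)), neg_le_neg_iff, Int.cast_le]

lemma finAbs_add_le (x y : K) : finAbs v (x + y) ≤ max (finAbs v x) (finAbs v y) := by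
  rcases eq_or_ne x 0 with rfl | hx
  · simp [finAbs_nonneg, finAbs_zero, le_max_iff, le_refl]
  rcases eq_or_ne y 0 with rfl | hy
  · simp [finAbs_nonneg, finAbs_zero, le_max_iff, le_refl]
  rcases eq_or_ne (x + y) 0 with hxy | hxy
  · rw [hxy, finAbs_zero]
    exact le_max_of_le_left (finAbs_nonneg v x)
  have h : v.valuation K (x+y) ≤ max (v.valuation K x) (v.valuation K y) := Valuation.map_add_le_max' (v.valuation K) x y
  rcases max_cases (v.valuation K x) (v.valuation K y) with ⟨he, _⟩ | ⟨he, _⟩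
  · rw [he] at h
    exact le_max_of_le_left ((finAbs_le_finAbs_iff v hxy hx).mpr h)
  · rw [he] at h
    exact le_max_of_le_right ((finAbs_le_finAbs_iff v hxy hy).mpr h)

lemma finAbs_zpow {x : K} (hx : x ≠ 0) (n : ℤ) : finAbs v (x ^ n) = finAbs v x ^ n := by
  rw [finAbs_eq v hx, finAbs_eq v (zpow_ne_zero n hx), finOrd_zpow v hx,
    ← Real.rpow_intCast (_ ^ _) n, ← Real.rpow_mul (le_of_lt (lt_trans one_pos (one_lt_normv v)))]
  congr 1
  push_cast
  ring


open Function in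
lemma finAbs_inv (x : K) : finAbs v x⁻¹ = (finAbs v x)⁻¹ := by
  rcases eq_or_ne x 0 with rfl | hx
  · simp [finAbs_zero]
  · rw [← zpow_neg_one, finAbs_zpow v hx, zpow_neg_one]

lemma finAbs_div (x y : K) : finAbs v (x / y) = finAbs v x / finAbs v y := by
  rw [div_eq_mul_inv, finAbs_mul, finAbs_inv, div_eq_mul_inv]

/-- count of `v` in the factorization of `span {a}`. -/
noncomputable def cnt (v : HeightOneSpectrum (𝓞 K)) (a : 𝓞 K) : ℕ :=
  (Associates.mk v.asIdeal).count (Associates.mk (Ideal.span {a})).factors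

lemma coe_ne_zero' {a : 𝓞 K} (ha : a ≠ 0) : (a : K) ≠ 0 := by
  simpa using ha

lemma finOrd_intCoe {a : 𝓞 K} (ha : a ≠ 0) : finOrd v (a : K) = (cnt v a : ℤ) := by
  apply finOrd_eq_of_val v _ (coe_ne_zero' ha)
  rw [RingOfIntegers.coe_eq_algebraMap, v.valuation_of_algebraMap, v.intValuation_apply,
    v.intValuationDef_if_neg ha]
  rfl

lemma finAbs_intCoe_le_one {a : 𝓞 K} (ha : a ≠ 0) : finAbs v (a : K) ≤ 1 := by
  rw [finAbs_eq v (coe_ne_zero' ha)]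
  apply Real.rpow_le_one_of_one_le_of_nonpos (one_lt_normv v).le
  apply div_nonpos_of_nonpos_of_nonneg
  · rw [finOrd_intCoe v ha]
    simp
  · positivity

lemma cnt_support_finite {a : 𝓞 K} (ha : a ≠ 0) : {v : HeightOneSpectrum (𝓞 K) | cnt v a ≠ 0}.Finite := by
  have hspan : Ideal.span ({a} : Set (𝓞 K)) ≠ 0 := by
    simpa [Ideal.span_singleton_eq_bot] using ha
  apply (Ideal.finite_factors hspan).subset
  intro v hv
  exact (Associates.count_ne_zero_iff_dvd hspan v.irreducible).mp hv

lemma finAbs_intCoe_eq_one_of_cnt {a : 𝓞 K} (ha : a ≠ 0) (h : cnt v a = 0) :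
    finAbs v (a : K) = 1 := by
  rw [finAbs_eq v (coe_ne_zero' ha), finOrd_intCoe v ha, h]
  norm_num

lemma mulSupport_finAbs_int_finite {a : 𝓞 K} (ha : a ≠ 0) :
    (Function.mulSupport fun v => finAbs v (a : K)).Finite := by
  apply (cnt_support_finite ha).subset
  intro v hv
  simp only [Set.mem_setOf_eq]
  intro h
  exact hv (finAbs_intCoe_eq_one_of_cnt v ha h)

lemma mulSupport_finAbs_finite {x : K} (hx : x ≠ 0) :
    (Function.mulSupport fun v => finAbs v x).Finite := by
  obtain ⟨a, b, hb, hab⟩ := IsFractionRing.div_surjective (A := 𝓞 K) x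
  have hbne : b ≠ 0 := nonZeroDivisors.ne_zero hb
  have hane : a ≠ 0 := by
    intro h
    rw [h] at hab
    simp at hab
    exact hx hab.symm
  apply ((mulSupport_finAbs_int_finite hane).union (mulSupport_finAbs_int_finite hbne)).subset
  intro v hv
  by_contra hc
  simp only [Set.mem_union, Function.mem_mulSupport, not_or, not_not] at hc
  apply hv
  show finAbs v x = 1
  rw [← hab, ← RingOfIntegers.coe_eq_algebraMap, ← RingOfIntegers.coe_eq_algebraMap,
    finAbs_div, hc.1, hc.2, one_div_one]

open Function in
lemma finprod_finAbs_int {a : 𝓞 K} (ha : a ≠ 0) :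
    ∏ᶠ v : HeightOneSpectrum (𝓞 K), finAbs v (a : K) =
      (Ideal.absNorm (Ideal.span {a}) : ℝ) ^ (-(1:ℝ) / (Module.finrank ℚ K : ℝ)) := by
  classical
  have hspan : Ideal.span ({a} : Set (𝓞 K)) ≠ 0 := by
    simpa [Ideal.span_singleton_eq_bot] using ha
  set F : HeightOneSpectrum (𝓞 K) → ℝ :=
    fun v => ((Ideal.absNorm v.asIdeal : ℝ)) ^ (cnt v a) with hF
  have hFnonneg : ∀ v, (0:ℝ) ≤ F v := fun v => by positivity
  have hFsupp : mulSupport F ⊆ {v | cnt v a ≠ 0} := by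
    intro v hv
    simp only [Set.mem_setOf_eq]
    intro h
    apply hv
    simp [hF, h]
  set T : Finset (HeightOneSpectrum (𝓞 K)) := (cnt_support_finite ha).toFinset with hT
  have hTF : mulSupport F ⊆ (T : Set _) := by
    intro v hv; simp [hT]; exact hFsupp hv
  -- step 1 : ∏ᶠ F = absNorm (span {a})
  have step1 : ∏ᶠ v, F v = (Ideal.absNorm (Ideal.span {a}) : ℝ) := by
    have hfac := Ideal.finprod_heightOneSpectrum_factorization hspan
    have hms := Ideal.finite_mulSupport (R := 𝓞 K) hspan
    set g : Ideal (𝓞 K) →* ℝ :=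
      (Nat.castRingHom ℝ).toMonoidHom.comp (Ideal.absNorm (S := 𝓞 K)).toMonoidHom with hg
    have := (g.map_finprod (f := fun v : HeightOneSpectrum (𝓞 K) =>
      v.maxPowDividing (Ideal.span {a})) hms).symm
    rw [hfac] at this
    rw [show ((Ideal.absNorm (Ideal.span ({a} : Set (𝓞 K))) : ℕ) : ℝ) = g (Ideal.span {a}) from rfl,
      ← this]
    apply finprod_congr
    intro v
    symm
    show ((Ideal.absNorm (v.maxPowDividing (Ideal.span {a})) : ℕ) : ℝ) = F v
    rw [IsDedekindDomain.HeightOneSpectrum.maxPowDividing, map_pow]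
    push_cast
    rfl
  -- step 2 : each finAbs is F v ^ (-1/d)
  have step2 : ∀ v : HeightOneSpectrum (𝓞 K),
      finAbs v (a : K) = F v ^ (-(1:ℝ) / (Module.finrank ℚ K : ℝ)) := by
    intro v
    show _ = ((Ideal.absNorm v.asIdeal : ℝ) ^ (cnt v a)) ^ (-(1:ℝ) / (Module.finrank ℚ K : ℝ))
    rw [finAbs_eq v (coe_ne_zero' ha), finOrd_intCoe v ha,
      ← Real.rpow_natCast ((Ideal.absNorm v.asIdeal : ℝ)) (cnt v a),
      ← Real.rpow_mul (by positivity)]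
    congr 1
    push_cast
    ring
  calc ∏ᶠ v, finAbs v (a : K) = ∏ᶠ v, F v ^ (-(1:ℝ) / (Module.finrank ℚ K : ℝ)) :=
        finprod_congr step2
    _ = ∏ v ∈ T, F v ^ (-(1:ℝ) / (Module.finrank ℚ K : ℝ)) := by
        apply finprod_eq_prod_of_mulSupport_subset
        intro v hv
        apply hTF
        intro hFv
        apply hv
        show F v ^ _ = 1
        rw [hFv, Real.one_rpow]
    _ = (∏ v ∈ T, F v) ^ (-(1:ℝ) / (Module.finrank ℚ K : ℝ)) :=
        Real.finset_prod_rpow T F (fun i _ => hFnonneg i) _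
    _ = (∏ᶠ v, F v) ^ (-(1:ℝ) / (Module.finrank ℚ K : ℝ)) := by
        rw [finprod_eq_prod_of_mulSupport_subset F hTF]
    _ = _ := by rw [step1]

/-- The full adelic product of absolute values. -/
noncomputable def adelicProd (x : K) : ℝ :=
  (∏ w : InfinitePlace K,
      w x ^ ((InfinitePlace.mult w : ℝ) / (Module.finrank ℚ K : ℝ))) *
    ∏ᶠ v : HeightOneSpectrum (𝓞 K), finAbs v x

lemma adelicProd_int {a : 𝓞 K} (ha : a ≠ 0) : adelicProd (a : K) = 1 := by
  have hd : (0:ℝ) < (Module.finrank ℚ K : ℝ) := finrank_pos' (K := K)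
  set n : ℕ := Ideal.absNorm (Ideal.span ({a} : Set (𝓞 K))) with hn
  have hspan : Ideal.span ({a} : Set (𝓞 K)) ≠ 0 := by
    simpa [Ideal.span_singleton_eq_bot] using ha
  have hnpos : (0:ℝ) < (n : ℝ) := by
    have : n ≠ 0 := by
      rw [hn, Ne, Ideal.absNorm_eq_zero_iff]
      exact hspan
    positivity
  have harch : (∏ w : InfinitePlace K,
      w (a : K) ^ ((InfinitePlace.mult w : ℝ) / (Module.finrank ℚ K : ℝ)))
      = (n : ℝ) ^ ((1:ℝ) / (Module.finrank ℚ K : ℝ)) := by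
    have hprod : ∏ w : InfinitePlace K, w (a : K) ^ (InfinitePlace.mult w) = (n : ℝ) := by
      rw [NumberField.InfinitePlace.prod_eq_abs_norm (a : K)]
      rw [← Algebra.coe_norm_int a]
      rw [hn, Ideal.absNorm_span_singleton]
      push_cast [Int.abs_eq_natAbs]
      rw [Nat.cast_natAbs, Int.cast_abs]
    calc ∏ w : InfinitePlace K, w (a : K) ^ ((InfinitePlace.mult w : ℝ) / (Module.finrank ℚ K : ℝ))
        = ∏ w : InfinitePlace K,
            ((w (a : K)) ^ (InfinitePlace.mult w)) ^ ((1:ℝ) / (Module.finrank ℚ K : ℝ)) := by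
          apply Finset.prod_congr rfl
          intro w _
          rw [← Real.rpow_natCast (w (a : K)) (InfinitePlace.mult w),
            ← Real.rpow_mul (apply_nonneg w _)]
          congr 1
          ring
      _ = (∏ w : InfinitePlace K, (w (a : K)) ^ (InfinitePlace.mult w)) ^
            ((1:ℝ) / (Module.finrank ℚ K : ℝ)) := by
          apply Real.finset_prod_rpow
          intro w _
          positivity
      _ = _ := by rw [hprod]
  rw [adelicProd, harch, finprod_finAbs_int ha, ← hn,
    ← Real.rpow_add hnpos,
    show (1:ℝ) / (Module.finrank ℚ K : ℝ) + -1 / (Module.finrank ℚ K : ℝ) = 0 by ring,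
    Real.rpow_zero]

lemma adelicProd_mul {x y : K} (hx : x ≠ 0) (hy : y ≠ 0) :
    adelicProd (x * y) = adelicProd x * adelicProd y := by
  rw [adelicProd, adelicProd, adelicProd]
  have h1 : (∏ w : InfinitePlace K,
      w (x * y) ^ ((InfinitePlace.mult w : ℝ) / (Module.finrank ℚ K : ℝ)))
      = (∏ w : InfinitePlace K, w x ^ ((InfinitePlace.mult w : ℝ) / (Module.finrank ℚ K : ℝ))) *
        ∏ w : InfinitePlace K, w y ^ ((InfinitePlace.mult w : ℝ) / (Module.finrank ℚ K : ℝ)) := by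
    rw [← Finset.prod_mul_distrib]
    apply Finset.prod_congr rfl
    intro w _
    rw [map_mul, Real.mul_rpow (apply_nonneg w _) (apply_nonneg w _)]
  have h2 : (∏ᶠ v : HeightOneSpectrum (𝓞 K), finAbs v (x * y))
      = (∏ᶠ v : HeightOneSpectrum (𝓞 K), finAbs v x) *
        ∏ᶠ v : HeightOneSpectrum (𝓞 K), finAbs v y := by
    rw [← finprod_mul_distrib (mulSupport_finAbs_finite hx) (mulSupport_finAbs_finite hy)]
    exact finprod_congr fun v => finAbs_mul v x y
  rw [h1, h2]
  ring

lemma adelicProd_one : adelicProd (1 : K) = 1 := by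
  have := adelicProd_int (K := K) (a := 1) one_ne_zero
  simpa using this

theorem productFormula {x : K} (hx : x ≠ 0) : adelicProd x = 1 := by
  obtain ⟨a, b, hb, hab⟩ := IsFractionRing.div_surjective (A := 𝓞 K) x
  have hbne : b ≠ 0 := nonZeroDivisors.ne_zero hb
  have hane : a ≠ 0 := by
    intro h
    rw [h] at hab
    simp at hab
    exact hx hab.symm
  have hxb : x * (b : K) = (a : K) := by
    rw [← hab, RingOfIntegers.coe_eq_algebraMap, RingOfIntegers.coe_eq_algebraMap,
      div_mul_cancel₀]
    exact fun h => coe_ne_zero' hbne (by rw [RingOfIntegers.coe_eq_algebraMap]; exact h)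
  have := adelicProd_mul hx (coe_ne_zero' hbne)
  rw [hxb, adelicProd_int hane, adelicProd_int hbne] at this
  linarith [this]

lemma rpow_finset_sum {ι : Type*} (s : Finset ι) {x : ℝ} (hx : 0 < x) (e : ι → ℝ) :
    ∏ i ∈ s, x ^ (e i) = x ^ (∑ i ∈ s, e i) := by
  classical
  induction s using Finset.induction with
  | empty => simp
  | insert _ _ hni ih =>
    rw [Finset.prod_insert hni, Finset.sum_insert hni, ih, ← Real.rpow_add hx]

lemma zpow_rpow_comm {x : ℝ} (hx : 0 < x) (n : ℤ) (r : ℝ) :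
    (x ^ n) ^ r = (x ^ r) ^ n := by
  rw [← Real.rpow_intCast x n, ← Real.rpow_mul hx.le, ← Real.rpow_intCast (x ^ r) n,
    ← Real.rpow_mul hx.le, mul_comm]

lemma finAbs_neg (x : K) : finAbs v (-x) = finAbs v x := by
  have h1 : finAbs v (-1 : K) = 1 := by
    have := finAbs_mul v (-1 : K) (-1 : K)
    rw [neg_mul_neg, one_mul, finAbs_one] at this
    have hnn := finAbs_nonneg v (-1 : K)
    nlinarith [this]
  rw [show -x = (-1 : K) * x by ring, finAbs_mul, h1, one_mul]

lemma finAbs_sum_le {ι : Type*} (s : Finset ι) (F : ι → K) {B : ℝ} (hB : 0 ≤ B)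
    (hb : ∀ i ∈ s, finAbs v (F i) ≤ B) : finAbs v (∑ i ∈ s, F i) ≤ B := by
  classical
  induction s using Finset.induction with
  | empty => simpa [finAbs_zero] using hB
  | @insert a s hni ih =>
    rw [Finset.sum_insert hni]
    refine le_trans (finAbs_add_le v _ _) (max_le (hb a (Finset.mem_insert_self a s)) ?_)
    exact ih fun i hi => hb i (Finset.mem_insert_of_mem hi)

lemma iSup_fin2 (r : Fin 2 → ℝ) : ⨆ i, r i = max (r 0) (r 1) := by
  apply le_antisymm
  · apply ciSup_le
    intro i
    fin_cases i
    · exact le_max_left _ _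
    · exact le_max_right _ _
  · apply max_le
    · exact le_ciSup (Set.Finite.bddAbove (Set.finite_range r)) 0
    · exact le_ciSup (Set.Finite.bddAbove (Set.finite_range r)) 1
end L2
section L4
variable {K : Type*} [Field K] [NumberField K]

lemma weilHeightElem_expand (β : K) :
    weilHeightElem β =
      (∏ w : InfinitePlace K,
        (max 1 (w β)) ^ ((InfinitePlace.mult w : ℝ) / (Module.finrank ℚ K : ℝ))) *
      ∏ᶠ v : HeightOneSpectrum (𝓞 K), max 1 (finAbs v β) := by
  rw [weilHeightElem, weilHeight]
  congr 1
  · apply Finset.prod_congr rfl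
    intro w _
    congr 1
    rw [iSup_fin2]
    simp
  · apply finprod_congr
    intro v
    rw [iSup_fin2]
    simp [finAbs_one]

lemma weilHeightElem_zero : weilHeightElem (0 : K) = 1 := by
  rw [weilHeightElem_expand]
  rw [finprod_eq_one_of_forall_eq_one (fun v => by simp [finAbs_zero])]
  rw [Finset.prod_eq_one (fun w _ => by simp), one_mul]

lemma ne_zero_of_one_lt_weilHeightElem {β : K} (h : 1 < weilHeightElem β) : β ≠ 0 := by
  intro hb
  rw [hb, weilHeightElem_zero] at h
  exact lt_irrefl 1 h

lemma laurentEval_add (g h : LaurentPolynomial K) (β : K) :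
    laurentEval (g + h) β = laurentEval g β + laurentEval h β := by
  classical
  have key : ∀ (p : LaurentPolynomial K), p.coeff.support ⊆ g.coeff.support ∪ h.coeff.support →
      laurentEval p β = ∑ i ∈ g.coeff.support ∪ h.coeff.support, p.coeff i * β ^ i := by
    intro p hp
    rw [laurentEval]
    apply Finset.sum_subset hp
    intro i _ hi
    rw [Finsupp.notMem_support_iff.mp hi, zero_mul]
  rw [key (g + h) (Finsupp.support_add), key g Finset.subset_union_left,
    key h Finset.subset_union_right, ← Finset.sum_add_distrib]
  apply Finset.sum_congr rfl
  intro i _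
  rw [AddMonoidAlgebra.coeff_add, Finsupp.add_apply, add_mul]


open Function in
lemma mulSupport_sup_finAbs {f : LaurentPolynomial K} (hf : f ≠ 0) :
    (mulSupport fun v : HeightOneSpectrum (𝓞 K) => ⨆ i : f.coeff.support, finAbs v (f.coeff i.1)).Finite := by
  classical
  have hne : f.coeff.support.Nonempty := Finsupp.support_nonempty_iff.mpr (mt AddMonoidAlgebra.coeff_eq_zero.mp hf)
  haveI : Nonempty (f.coeff.support : Type _) := hne.to_subtype
  have hfin : (⋃ i ∈ (f.coeff.support : Set ℤ), mulSupport fun v : HeightOneSpectrum (𝓞 K) =>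
      finAbs v (f.coeff i)).Finite := by
    apply Set.Finite.biUnion (f.coeff.support.finite_toSet)
    intro i hi
    exact mulSupport_finAbs_finite (Finsupp.mem_support_iff.mp hi)
  apply hfin.subset
  intro v hv
  by_contra hc
  apply hv
  show (⨆ i : f.coeff.support, finAbs v (f.coeff i.1)) = 1
  have : ∀ i : f.coeff.support, finAbs v (f.coeff i.1) = 1 := by
    intro i
    by_contra h1
    apply hc
    exact Set.mem_biUnion i.2 h1
  rw [funext this]
  exact ciSup_const

lemma weilHeightLaurent_zero : weilHeightLaurent (0 : LaurentPolynomial K) = 0 := by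
  rw [weilHeightLaurent, weilHeight]
  haveI : IsEmpty ((0 : LaurentPolynomial K).coeff.support : Type _) := by
    rw [Finset.isEmpty_coe_sort]
    exact Finsupp.support_zero
  have : ∀ w : InfinitePlace K, (⨆ i : ((0 : LaurentPolynomial K).coeff.support : Type _),
      w ((0 : LaurentPolynomial K).coeff i.1)) = 0 := fun w => Real.iSup_of_isEmpty _
  rw [Finset.prod_eq_zero (Finset.mem_univ (Classical.arbitrary (InfinitePlace K)))]
  · rw [zero_mul]
  · rw [this]
    apply Real.zero_rpow
    apply ne_of_gt
    apply div_pos _ (finrank_pos' (K := K))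
    exact_mod_cast NumberField.InfinitePlace.mult_pos

open Function in
lemma weilHeightLaurent_ge_one {f : LaurentPolynomial K} (hf : f ≠ 0) :
    1 ≤ weilHeightLaurent f := by
  classical
  have hne : f.coeff.support.Nonempty := Finsupp.support_nonempty_iff.mpr (mt AddMonoidAlgebra.coeff_eq_zero.mp hf)
  haveI : Nonempty (f.coeff.support : Type _) := hne.to_subtype
  obtain ⟨i₀, hi₀⟩ := hne
  have hc : f.coeff i₀ ≠ 0 := Finsupp.mem_support_iff.mp hi₀
  have hMfin := mulSupport_sup_finAbs hf
  have hcfin := mulSupport_finAbs_finite hc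
  set T : Finset (HeightOneSpectrum (𝓞 K)) := (hMfin.union hcfin).toFinset with hT
  have hMT : mulSupport (fun v : HeightOneSpectrum (𝓞 K) => ⨆ i : f.coeff.support, finAbs v (f.coeff i.1))
      ⊆ (T : Set _) := by
    intro v hv; simp only [hT, Set.Finite.coe_toFinset]; exact Set.mem_union_left _ hv
  have hcT : mulSupport (fun v : HeightOneSpectrum (𝓞 K) => finAbs v (f.coeff i₀)) ⊆ (T : Set _) := by
    intro v hv; simp only [hT, Set.Finite.coe_toFinset]; exact Set.mem_union_right _ hv
  have h1 : (1:ℝ) = (∏ w : InfinitePlace K,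
      (w (f.coeff i₀)) ^ ((InfinitePlace.mult w : ℝ) / (Module.finrank ℚ K : ℝ))) *
      ∏ v ∈ T, finAbs v (f.coeff i₀) := by
    rw [← finprod_eq_prod_of_mulSupport_subset _ hcT, ← adelicProd, productFormula hc]
  rw [weilHeightLaurent, weilHeight,
    finprod_eq_prod_of_mulSupport_subset _ hMT, h1]
  apply mul_le_mul
  · apply Finset.prod_le_prod
    · intro w _
      positivity
    · intro w _
      apply Real.rpow_le_rpow (apply_nonneg w _) _ (by positivity)
      exact le_ciSup (f := fun i : f.coeff.support => w (f.coeff i.1))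
        (Set.Finite.bddAbove (Set.finite_range _)) ⟨i₀, hi₀⟩
  · apply Finset.prod_le_prod
    · intro v _
      exact finAbs_nonneg v _
    · intro v _
      exact le_ciSup (f := fun i : f.coeff.support => finAbs v (f.coeff i.1))
        (Set.Finite.bddAbove (Set.finite_range _)) ⟨i₀, hi₀⟩
  · exact Finset.prod_nonneg fun v _ => finAbs_nonneg v _
  · apply Finset.prod_nonneg
    intro w _
    exact Real.rpow_nonneg (Real.iSup_nonneg fun i => apply_nonneg w _) _
end L4


/-- Gap principle (Proposition 2.3 of Lenstra): let `β` be an algebraic number, not a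
root of unity, with `H(β) > 1`, and let `f ∈ K[x,x⁻¹]` be a Laurent polynomial with at
most `k+1` terms over a number field `K`, with `f = g + h` where every monomial of `g`
has degree at most `d₀` and every monomial of `h` has degree at least `d₁`.  If
`d₁ - d₀ > log(k·H(f))/log H(β)` and `f(β) = 0`, then `g(β) = 0` and `h(β) = 0`. -/
theorem stmt18 {K : Type*} [Field K] [NumberField K] (β : K)
    (hroot : ∀ n : ℕ, 0 < n → β ^ n ≠ 1) (hHβ : 1 < weilHeightElem β)
    (f g h : LaurentPolynomial K) (k : ℕ) (hterms : f.coeff.support.card ≤ k + 1)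
    (hfgh : f = g + h) (d₀ d₁ : ℤ)
    (hg : ∀ i ∈ g.coeff.support, i ≤ d₀) (hh : ∀ i ∈ h.coeff.support, d₁ ≤ i)
    (hgap : Real.log ((k : ℝ) * weilHeightLaurent f) / Real.log (weilHeightElem β) <
      ((d₁ : ℝ) - (d₀ : ℝ)))
    (hfβ : laurentEval f β = 0) :
    laurentEval g β = 0 ∧ laurentEval h β = 0 := by
  classical
  have hsum := laurentEval_add g h β
  rw [← hfgh, hfβ] at hsum
  by_cases hgb : laurentEval g β = 0
  · refine ⟨hgb, ?_⟩
    rw [hgb, zero_add] at hsum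
    exact hsum.symm
  exfalso
  set D := ((Module.finrank ℚ K : ℕ) : ℝ) with hD
  have hDpos : 0 < D := finrank_pos' (K := K)
  have hβ0 : β ≠ 0 := ne_zero_of_one_lt_weilHeightElem hHβ
  set u := laurentEval g β with hu
  have hu0 : u ≠ 0 := hgb
  have huh : laurentEval h β = -u := by
    linear_combination -hsum
  have hlogHβ : 0 < Real.log (weilHeightElem β) := Real.log_pos hHβ
  -- f is nonzero
  have hf0 : f ≠ 0 := by
    rintro rfl
    have hgap0 : (0:ℝ) < (d₁ : ℝ) - (d₀ : ℝ) := by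
      refine lt_of_le_of_lt ?_ hgap
      rw [weilHeightLaurent_zero, mul_zero, Real.log_zero, zero_div]
    have hdd : d₀ < d₁ := by exact_mod_cast sub_pos.mp hgap0
    have hgne : g.coeff.support.Nonempty := by
      rw [Finsupp.support_nonempty_iff]
      intro hg0
      apply hu0
      rw [hu]
      simp [laurentEval, hg0]
    obtain ⟨i, hi⟩ := hgne
    have hhg : h = -g := by
      have : g + h = 0 := hfgh.symm
      linear_combination this
    have hih : i ∈ h.coeff.support := by
      rw [hhg, AddMonoidAlgebra.coeff_neg, Finsupp.support_neg]
      exact hi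
    have := hh i hih
    have := hg i hi
    omega
  -- f has at least two terms
  have hfne : f.coeff.support.Nonempty := Finsupp.support_nonempty_iff.mpr (mt AddMonoidAlgebra.coeff_eq_zero.mp hf0)
  haveI : Nonempty (f.coeff.support : Type _) := hfne.to_subtype
  have hcard2 : 2 ≤ f.coeff.support.card := by
    by_contra hlt
    push_neg at hlt
    interval_cases hcard : f.coeff.support.card
    · exact hf0 (AddMonoidAlgebra.coeff_eq_zero.mp (Finsupp.support_eq_empty.mp (Finset.card_eq_zero.mp hcard)))
    · obtain ⟨i₀, hi₀⟩ := Finset.card_eq_one.mp hcard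
      rw [laurentEval, hi₀, Finset.sum_singleton] at hfβ
      have hfi₀ : f.coeff i₀ ≠ 0 := by
        apply Finsupp.mem_support_iff.mp
        rw [hi₀]; exact Finset.mem_singleton_self i₀
      exact (mul_ne_zero hfi₀ (zpow_ne_zero i₀ hβ0)) hfβ
  have hk1 : 1 ≤ k := by omega
  have hkpos : (0:ℝ) < (k:ℝ) := by exact_mod_cast hk1
  have hHf1 : 1 ≤ weilHeightLaurent f := weilHeightLaurent_ge_one hf0
  -- the gap is positive
  have hdd : d₀ < d₁ := by
    have h1 : (0:ℝ) ≤ Real.log ((k:ℝ) * weilHeightLaurent f) := by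
      apply Real.log_nonneg
      calc (1:ℝ) = 1 * 1 := by ring
        _ ≤ (k:ℝ) * weilHeightLaurent f := by
            apply mul_le_mul (by exact_mod_cast hk1) hHf1 one_pos.le hkpos.le
    have : (0:ℝ) < (d₁:ℝ) - (d₀:ℝ) := lt_of_le_of_lt (div_nonneg h1 hlogHβ.le) hgap
    exact_mod_cast sub_pos.mp this
  -- support decomposition
  have hgf : ∀ i ∈ g.coeff.support, f.coeff i = g.coeff i ∧ i ∉ h.coeff.support := by
    intro i hi
    have hint : i ∉ h.coeff.support := by
      intro hih
      have := hh i hih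
      have := hg i hi
      omega
    constructor
    · rw [hfgh, AddMonoidAlgebra.coeff_add, Finsupp.add_apply, Finsupp.notMem_support_iff.mp hint, add_zero]
    · exact hint
  have hhf : ∀ i ∈ h.coeff.support, f.coeff i = h.coeff i ∧ i ∉ g.coeff.support := by
    intro i hi
    have hint : i ∉ g.coeff.support := by
      intro hig
      have := hh i hi
      have := hg i hig
      omega
    constructor
    · rw [hfgh, AddMonoidAlgebra.coeff_add, Finsupp.add_apply, Finsupp.notMem_support_iff.mp hint, zero_add]
    · exact hint
  have hgsub : g.coeff.support ⊆ f.coeff.support := by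
    intro i hi
    rw [Finsupp.mem_support_iff, (hgf i hi).1]
    exact Finsupp.mem_support_iff.mp hi
  have hhsub : h.coeff.support ⊆ f.coeff.support := by
    intro i hi
    rw [Finsupp.mem_support_iff, (hhf i hi).1]
    exact Finsupp.mem_support_iff.mp hi
  have hgne : g ≠ 0 := by
    intro hg0
    apply hu0
    rw [hu, hg0]
    simp [laurentEval]
  have hhne : h ≠ 0 := by
    intro hh0
    rw [hh0] at huh
    apply hu0
    have h0 : laurentEval (0 : LaurentPolynomial K) β = 0 := by simp [laurentEval]
    rw [h0] at huh
    exact neg_eq_zero.mp huh.symm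
  -- support cardinalities
  have hgcard : g.coeff.support.card ≤ k := by
    have hsub : g.coeff.support ⊆ f.coeff.support \ h.coeff.support := fun i hi =>
      Finset.mem_sdiff.mpr ⟨hgsub hi, (hgf i hi).2⟩
    have hhcard1 : 1 ≤ h.coeff.support.card :=
      Finset.card_pos.mpr (Finsupp.support_nonempty_iff.mpr (mt AddMonoidAlgebra.coeff_eq_zero.mp hhne))
    have h1 := Finset.card_le_card hsub
    rw [Finset.card_sdiff_of_subset hhsub] at h1
    omega
  have hhcard : h.coeff.support.card ≤ k := by
    have hsub : h.coeff.support ⊆ f.coeff.support \ g.coeff.support := fun i hi =>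
      Finset.mem_sdiff.mpr ⟨hhsub hi, (hhf i hi).2⟩
    have hgcard1 : 1 ≤ g.coeff.support.card :=
      Finset.card_pos.mpr (Finsupp.support_nonempty_iff.mpr (mt AddMonoidAlgebra.coeff_eq_zero.mp hgne))
    have h1 := Finset.card_le_card hsub
    rw [Finset.card_sdiff_of_subset hgsub] at h1
    omega
  -- local data
  set e : InfinitePlace K → ℝ := fun w => (InfinitePlace.mult w : ℝ) / D with he
  have hepos : ∀ w, 0 < e w := fun w =>
    div_pos (by exact_mod_cast NumberField.InfinitePlace.mult_pos) hDpos
  have hesum : ∑ w : InfinitePlace K, e w = 1 := by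
    rw [he, ← Finset.sum_div]
    rw [show (∑ w : InfinitePlace K, ((InfinitePlace.mult w : ℝ))) = D from ?_]
    · exact div_self hDpos.ne'
    · rw [hD]
      exact_mod_cast NumberField.InfinitePlace.sum_mult_eq (K := K)
  set Mw : InfinitePlace K → ℝ := fun w => ⨆ i : f.coeff.support, w (f.coeff i.1) with hMw
  set Mv : HeightOneSpectrum (𝓞 K) → ℝ :=
    fun v => ⨆ i : f.coeff.support, finAbs v (f.coeff i.1) with hMv
  set cw : InfinitePlace K → ℝ := fun w => (w β) ^ (if w β ≤ 1 then d₁ else d₀) with hcw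
  set cv : HeightOneSpectrum (𝓞 K) → ℝ :=
    fun v => (finAbs v β) ^ (if finAbs v β ≤ 1 then d₁ else d₀) with hcv
  have hβw : ∀ w : InfinitePlace K, 0 < w β :=
    fun w => NumberField.InfinitePlace.pos_iff.mpr hβ0
  have hβv : ∀ v, 0 < finAbs v β := fun v => finAbs_pos v hβ0
  have hMwpos : ∀ w, 0 < Mw w := by
    intro w
    obtain ⟨i₀, hi₀⟩ := hfne
    calc (0:ℝ) < w (f.coeff i₀) :=
          NumberField.InfinitePlace.pos_iff.mpr (Finsupp.mem_support_iff.mp hi₀)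
      _ ≤ Mw w := le_ciSup (f := fun i : f.coeff.support => w (f.coeff i.1))
          (Set.Finite.bddAbove (Set.finite_range _)) ⟨i₀, hi₀⟩
  have hMvnonneg : ∀ v, 0 ≤ Mv v := fun v => Real.iSup_nonneg fun i => finAbs_nonneg v _
  have hMwle : ∀ w : InfinitePlace K, ∀ i ∈ f.coeff.support, w (f.coeff i) ≤ Mw w := fun w i hi =>
    le_ciSup (f := fun i : f.coeff.support => w (f.coeff i.1))
      (Set.Finite.bddAbove (Set.finite_range _)) ⟨i, hi⟩
  have hMvle : ∀ v, ∀ i ∈ f.coeff.support, finAbs v (f.coeff i) ≤ Mv v := fun v i hi =>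
    le_ciSup (f := fun i : f.coeff.support => finAbs v (f.coeff i.1))
      (Set.Finite.bddAbove (Set.finite_range _)) ⟨i, hi⟩
  have hcwpos : ∀ w, 0 < cw w := fun w => zpow_pos (hβw w) _
  have hcvpos : ∀ v, 0 < cv v := fun v => zpow_pos (hβv v) _
  -- local archimedean bound
  have harch : ∀ w : InfinitePlace K, w u ≤ (k:ℝ) * (Mw w * cw w) := by
    intro w
    by_cases hle : w β ≤ 1
    · have hcweq : cw w = (w β) ^ d₁ := by rw [hcw]; simp only [if_pos hle]
      have hwu : w u = w (laurentEval h β) := by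
        rw [huh]
        exact (w.1.map_neg u).symm
      have hstep : ∀ i ∈ h.coeff.support, w (h.coeff i * β ^ i) ≤ Mw w * (w β) ^ d₁ := by
        intro i hi
        rw [map_mul, map_zpow₀]
        apply mul_le_mul
        · rw [← (hhf i hi).1]; exact hMwle w i (hhsub hi)
        · exact zpow_le_zpow_right_of_le_one₀ (hβw w) hle (hh i hi)
        · exact (zpow_pos (hβw w) i).le
        · exact (hMwpos w).le
      calc w u = w (∑ i ∈ h.coeff.support, h.coeff i * β ^ i) := by rw [hwu, laurentEval]
        _ ≤ ∑ i ∈ h.coeff.support, w (h.coeff i * β ^ i) := w.1.sum_le _ _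
        _ ≤ h.coeff.support.card • (Mw w * (w β) ^ d₁) := Finset.sum_le_card_nsmul _ _ _ hstep
        _ = (h.coeff.support.card : ℝ) * (Mw w * (w β) ^ d₁) := nsmul_eq_mul _ _
        _ ≤ (k:ℝ) * (Mw w * cw w) := by
            rw [hcweq]
            apply mul_le_mul_of_nonneg_right (by exact_mod_cast hhcard)
            exact mul_nonneg (hMwpos w).le (zpow_pos (hβw w) _).le
    · push_neg at hle
      have hcweq : cw w = (w β) ^ d₀ := by rw [hcw]; simp only [if_neg (not_le.mpr hle)]
      have hstep : ∀ i ∈ g.coeff.support, w (g.coeff i * β ^ i) ≤ Mw w * (w β) ^ d₀ := by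
        intro i hi
        rw [map_mul, map_zpow₀]
        apply mul_le_mul
        · rw [← (hgf i hi).1]; exact hMwle w i (hgsub hi)
        · exact zpow_le_zpow_right₀ hle.le (hg i hi)
        · exact (zpow_pos (hβw w) i).le
        · exact (hMwpos w).le
      calc w u = w (∑ i ∈ g.coeff.support, g.coeff i * β ^ i) := by rw [hu, laurentEval]
        _ ≤ ∑ i ∈ g.coeff.support, w (g.coeff i * β ^ i) := w.1.sum_le _ _
        _ ≤ g.coeff.support.card • (Mw w * (w β) ^ d₀) := Finset.sum_le_card_nsmul _ _ _ hstep
        _ = (g.coeff.support.card : ℝ) * (Mw w * (w β) ^ d₀) := nsmul_eq_mul _ _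
        _ ≤ (k:ℝ) * (Mw w * cw w) := by
            rw [hcweq]
            apply mul_le_mul_of_nonneg_right (by exact_mod_cast hgcard)
            exact mul_nonneg (hMwpos w).le (zpow_pos (hβw w) _).le
  -- local non-archimedean bound
  have hfinb : ∀ v, finAbs v u ≤ Mv v * cv v := by
    intro v
    by_cases hle : finAbs v β ≤ 1
    · have hcveq : cv v = (finAbs v β) ^ d₁ := by rw [hcv]; simp only [if_pos hle]
      have hvu : finAbs v u = finAbs v (laurentEval h β) := by rw [huh, finAbs_neg]
      rw [hvu, laurentEval, hcveq]
      refine finAbs_sum_le v _ _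
        (mul_nonneg (hMvnonneg v) (zpow_pos (hβv v) d₁).le) ?_
      intro i hi
      rw [finAbs_mul, finAbs_zpow v hβ0]
      apply mul_le_mul
      · rw [← (hhf i hi).1]; exact hMvle v i (hhsub hi)
      · exact zpow_le_zpow_right_of_le_one₀ (hβv v) hle (hh i hi)
      · exact (zpow_pos (hβv v) i).le
      · exact hMvnonneg v
    · push_neg at hle
      have hcveq : cv v = (finAbs v β) ^ d₀ := by rw [hcv]; simp only [if_neg (not_le.mpr hle)]
      rw [hu, laurentEval, hcveq]
      refine finAbs_sum_le v _ _
        (mul_nonneg (hMvnonneg v) (zpow_pos (hβv v) d₀).le) ?_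
      intro i hi
      rw [finAbs_mul, finAbs_zpow v hβ0]
      apply mul_le_mul
      · rw [← (hgf i hi).1]; exact hMvle v i (hgsub hi)
      · exact zpow_le_zpow_right₀ hle.le (hg i hi)
      · exact (zpow_pos (hβv v) i).le
      · exact hMvnonneg v
  -- global support set
  have hMfin := mulSupport_sup_finAbs hf0
  have hufin := mulSupport_finAbs_finite hu0
  have hβfin := mulSupport_finAbs_finite hβ0
  set T : Finset (HeightOneSpectrum (𝓞 K)) := ((hufin.union hβfin).union hMfin).toFinset with hT
  have hout : ∀ v : HeightOneSpectrum (𝓞 K), v ∉ T →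
      finAbs v u = 1 ∧ finAbs v β = 1 ∧ Mv v = 1 := by
    intro v hv
    rw [hT, Set.Finite.mem_toFinset, Set.mem_union, Set.mem_union] at hv
    push_neg at hv
    exact ⟨Function.notMem_mulSupport.mp hv.1.1, Function.notMem_mulSupport.mp hv.1.2,
      Function.notMem_mulSupport.mp hv.2⟩
  have husub : Function.mulSupport (fun v => finAbs v u) ⊆ (T : Set _) := by
    intro v hv
    by_contra hc
    exact Function.mem_mulSupport.mp hv (hout v hc).1
  have hβsub : Function.mulSupport (fun v => finAbs v β) ⊆ (T : Set _) := by
    intro v hv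
    by_contra hc
    exact Function.mem_mulSupport.mp hv (hout v hc).2.1
  have hMvsub : Function.mulSupport Mv ⊆ (T : Set _) := by
    intro v hv
    by_contra hc
    exact Function.mem_mulSupport.mp hv (hout v hc).2.2
  have hmaxsub : Function.mulSupport (fun v => max 1 (finAbs v β)) ⊆ (T : Set _) := by
    intro v hv
    by_contra hc
    apply Function.mem_mulSupport.mp hv
    rw [(hout v hc).2.1, max_self]
  -- product formula instances
  have hPFu : (1:ℝ) = (∏ w : InfinitePlace K, (w u) ^ e w) * ∏ v ∈ T, finAbs v u := by
    have hpf := productFormula hu0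
    rw [adelicProd, finprod_eq_prod_of_mulSupport_subset _ husub] at hpf
    exact hpf.symm
  have hPFβ : (1:ℝ) = (∏ w : InfinitePlace K, (w β) ^ e w) * ∏ v ∈ T, finAbs v β := by
    have hpf := productFormula hβ0
    rw [adelicProd, finprod_eq_prod_of_mulSupport_subset _ hβsub] at hpf
    exact hpf.symm
  have hHfeq : weilHeightLaurent f = (∏ w : InfinitePlace K, Mw w ^ e w) * ∏ v ∈ T, Mv v := by
    rw [weilHeightLaurent, weilHeight, finprod_eq_prod_of_mulSupport_subset _ hMvsub]
  have hHβeq : weilHeightElem β =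
      (∏ w : InfinitePlace K, (max 1 (w β)) ^ e w) * ∏ v ∈ T, max 1 (finAbs v β) := by
    rw [weilHeightElem_expand, finprod_eq_prod_of_mulSupport_subset _ hmaxsub]
  -- decomposition of the local exponent factors
  have hmaxwpos : ∀ w : InfinitePlace K, (0:ℝ) < max 1 (w β) :=
    fun w => lt_of_lt_of_le one_pos (le_max_left _ _)
  have hmaxvpos : ∀ v, (0:ℝ) < max 1 (finAbs v β) :=
    fun v => lt_of_lt_of_le one_pos (le_max_left _ _)
  have hcwdec : ∀ w : InfinitePlace K, (cw w) ^ e w =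
      ((w β) ^ e w) ^ d₁ * ((max 1 (w β)) ^ e w) ^ (d₀ - d₁) := by
    intro w
    have hsplit : cw w = (w β) ^ d₁ * (max 1 (w β)) ^ (d₀ - d₁) := by
      by_cases hle : w β ≤ 1
      · have h1 : cw w = w β ^ d₁ := by rw [hcw]; simp only [if_pos hle]
        rw [h1, max_eq_left hle, one_zpow, mul_one]
      · push_neg at hle
        have h1 : cw w = w β ^ d₀ := by rw [hcw]; simp only [if_neg (not_le.mpr hle)]
        rw [h1, max_eq_right hle.le, ← zpow_add₀ (hβw w).ne']
        congr 1
        ring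
    rw [hsplit, Real.mul_rpow (zpow_pos (hβw w) _).le (zpow_pos (hmaxwpos w) _).le,
      zpow_rpow_comm (hβw w), zpow_rpow_comm (hmaxwpos w)]
  have hcvdec : ∀ v, cv v =
      ((finAbs v β)) ^ d₁ * (max 1 (finAbs v β)) ^ (d₀ - d₁) := by
    intro v
    by_cases hle : finAbs v β ≤ 1
    · have h1 : cv v = finAbs v β ^ d₁ := by rw [hcv]; simp only [if_pos hle]
      rw [h1, max_eq_left hle, one_zpow, mul_one]
    · push_neg at hle
      have h1 : cv v = finAbs v β ^ d₀ := by rw [hcv]; simp only [if_neg (not_le.mpr hle)]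
      rw [h1, max_eq_right hle.le, ← zpow_add₀ (hβv v).ne']
      congr 1
      ring
  -- product computations
  have hArch : ∏ w : InfinitePlace K, ((k:ℝ) * (Mw w * cw w)) ^ e w =
      (k:ℝ) * (∏ w : InfinitePlace K, Mw w ^ e w) * ∏ w : InfinitePlace K, cw w ^ e w := by
    have hsplit : ∀ w ∈ Finset.univ (α := InfinitePlace K),
        ((k:ℝ) * (Mw w * cw w)) ^ e w = (k:ℝ) ^ e w * (Mw w ^ e w * cw w ^ e w) := by
      intro w _
      rw [Real.mul_rpow hkpos.le (mul_nonneg (hMwpos w).le (hcwpos w).le),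
        Real.mul_rpow (hMwpos w).le (hcwpos w).le]
    rw [Finset.prod_congr rfl hsplit, Finset.prod_mul_distrib, Finset.prod_mul_distrib,
      rpow_finset_sum _ hkpos, hesum, Real.rpow_one]
    ring
  have hcwprod : ∏ w : InfinitePlace K, cw w ^ e w =
      (∏ w : InfinitePlace K, (w β) ^ e w) ^ d₁ *
      (∏ w : InfinitePlace K, (max 1 (w β)) ^ e w) ^ (d₀ - d₁) := by
    rw [Finset.prod_congr rfl (fun w _ => hcwdec w), Finset.prod_mul_distrib,
      Finset.prod_zpow, Finset.prod_zpow]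
  have hcvprod : ∏ v ∈ T, cv v =
      (∏ v ∈ T, finAbs v β) ^ d₁ * (∏ v ∈ T, max 1 (finAbs v β)) ^ (d₀ - d₁) := by
    rw [Finset.prod_congr rfl (fun v _ => hcvdec v), Finset.prod_mul_distrib,
      Finset.prod_zpow, Finset.prod_zpow]
  have hQ : (∏ w : InfinitePlace K, cw w ^ e w) * (∏ v ∈ T, cv v) =
      (weilHeightElem β) ^ (d₀ - d₁) := by
    rw [hcwprod, hcvprod]
    have h1 : (∏ w : InfinitePlace K, (w β) ^ e w) ^ d₁ * (∏ v ∈ T, finAbs v β) ^ d₁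
        = 1 := by
      rw [← mul_zpow, ← hPFβ, one_zpow]
    have h2 : (∏ w : InfinitePlace K, (max 1 (w β)) ^ e w) ^ (d₀ - d₁) *
        (∏ v ∈ T, max 1 (finAbs v β)) ^ (d₀ - d₁) = (weilHeightElem β) ^ (d₀ - d₁) := by
      rw [← mul_zpow, ← hHβeq]
    calc (∏ w : InfinitePlace K, (w β) ^ e w) ^ d₁ *
          (∏ w : InfinitePlace K, (max 1 (w β)) ^ e w) ^ (d₀ - d₁) *
          ((∏ v ∈ T, finAbs v β) ^ d₁ * (∏ v ∈ T, max 1 (finAbs v β)) ^ (d₀ - d₁))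
        = ((∏ w : InfinitePlace K, (w β) ^ e w) ^ d₁ * (∏ v ∈ T, finAbs v β) ^ d₁) *
          ((∏ w : InfinitePlace K, (max 1 (w β)) ^ e w) ^ (d₀ - d₁) *
           (∏ v ∈ T, max 1 (finAbs v β)) ^ (d₀ - d₁)) := by ring
      _ = 1 * (weilHeightElem β) ^ (d₀ - d₁) := by rw [h1, h2]
      _ = (weilHeightElem β) ^ (d₀ - d₁) := one_mul _
  -- the key global inequality
  have hkey : (1:ℝ) ≤ (k:ℝ) * weilHeightLaurent f * (weilHeightElem β) ^ (d₀ - d₁) := by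
    calc (1:ℝ) = (∏ w : InfinitePlace K, (w u) ^ e w) * ∏ v ∈ T, finAbs v u := hPFu
      _ ≤ (∏ w : InfinitePlace K, ((k:ℝ) * (Mw w * cw w)) ^ e w) *
          ∏ v ∈ T, (Mv v * cv v) := by
          apply mul_le_mul
          · apply Finset.prod_le_prod
            · intro w _
              exact Real.rpow_nonneg (apply_nonneg w u) _
            · intro w _
              exact Real.rpow_le_rpow (apply_nonneg w u) (harch w) (hepos w).le
          · apply Finset.prod_le_prod
            · intro v _
              exact finAbs_nonneg v u
            · intro v _
              exact hfinb v
          · exact Finset.prod_nonneg fun v _ => finAbs_nonneg v u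
          · exact Finset.prod_nonneg fun w _ => Real.rpow_nonneg
              (mul_nonneg hkpos.le (mul_nonneg (hMwpos w).le (hcwpos w).le)) _
      _ = ((k:ℝ) * (∏ w : InfinitePlace K, Mw w ^ e w) *
            ∏ w : InfinitePlace K, cw w ^ e w) * ((∏ v ∈ T, Mv v) * ∏ v ∈ T, cv v) := by
          rw [hArch, Finset.prod_mul_distrib]
      _ = (k:ℝ) * ((∏ w : InfinitePlace K, Mw w ^ e w) * ∏ v ∈ T, Mv v) *
            ((∏ w : InfinitePlace K, cw w ^ e w) * ∏ v ∈ T, cv v) := by ring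
      _ = (k:ℝ) * weilHeightLaurent f * (weilHeightElem β) ^ (d₀ - d₁) := by
          rw [hHfeq, hQ]
  -- conclude
  have hHβpos : (0:ℝ) < weilHeightElem β := lt_trans one_pos hHβ
  have h2 : (weilHeightElem β) ^ (d₁ - d₀) ≤ (k:ℝ) * weilHeightLaurent f := by
    calc (weilHeightElem β) ^ (d₁ - d₀) = (weilHeightElem β) ^ (d₁ - d₀) * 1 := (mul_one _).symm
      _ ≤ (weilHeightElem β) ^ (d₁ - d₀) *
          ((k:ℝ) * weilHeightLaurent f * (weilHeightElem β) ^ (d₀ - d₁)) :=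
          mul_le_mul_of_nonneg_left hkey (zpow_pos hHβpos _).le
      _ = (k:ℝ) * weilHeightLaurent f *
          ((weilHeightElem β) ^ (d₁ - d₀) * (weilHeightElem β) ^ (d₀ - d₁)) := by ring
      _ = (k:ℝ) * weilHeightLaurent f := by
          rw [← zpow_add₀ hHβpos.ne', show d₁ - d₀ + (d₀ - d₁) = 0 by ring, zpow_zero, mul_one]
  have h3 := Real.log_le_log (zpow_pos hHβpos _) h2
  rw [Real.log_zpow] at h3
  have h4 : ((d₁:ℝ) - (d₀:ℝ)) ≤
      Real.log ((k:ℝ) * weilHeightLaurent f) / Real.log (weilHeightElem β) := by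
    rw [le_div_iff₀ hlogHβ]
    push_cast at h3 ⊢
    linarith
  linarith
end
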